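/- Let A, B, C, α, β, γ be nonzero real numbers and define δ = A²α² + B²β² + C²γ² − 2ABαβ − 2ACαγ − 2BCβγ. Then δ = 0 if and only if Aα, Bβ, Cγ all have the same sign and one of the following holds: √|Aα| = √|Bβ| + √|Cγ|, or √|Bβ| = √|Aα| + √|Cγ|, or √|Cγ| = √|Aα| + √|Bβ|. -/
import Mathlib


open Real

lemma aux_pos (a b c : ℝ) (ha : 0 < a) (hb : 0 < b) (hc : 0 < c) :
    a^2 + b^2 + c^2 - 2*a*b - 2*a*c - 2*b*c = 0 ↔
    (Real.sqrt a = Real.sqrt b + Real.sqrt c ∨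
     Real.sqrt b = Real.sqrt a + Real.sqrt c ∨
     Real.sqrt c = Real.sqrt a + Real.sqrt b) := by
  have hx : Real.sqrt a ^ 2 = a := Real.sq_sqrt ha.le
  have hy : Real.sqrt b ^ 2 = b := Real.sq_sqrt hb.le
  have hz : Real.sqrt c ^ 2 = c := Real.sq_sqrt hc.le
  set x := Real.sqrt a
  set y := Real.sqrt b
  set z := Real.sqrt c
  have hx0 : 0 < x := Real.sqrt_pos.2 ha
  have hy0 : 0 < y := Real.sqrt_pos.2 hb
  have hz0 : 0 < z := Real.sqrt_pos.2 hc
  constructor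
  · intro h
    rw [← hx, ← hy, ← hz] at h
    have key : (x + y + z) * ((y + z - x) * ((x - y + z) * (x + y - z))) = 0 := by
      linear_combination -h
    have hs : x + y + z ≠ 0 := by positivity
    rcases mul_eq_zero.1 key with h1 | h2
    · exact absurd h1 hs
    rcases mul_eq_zero.1 h2 with h3 | h4
    · left; linarith
    rcases mul_eq_zero.1 h4 with h5 | h6
    · right; left; linarith
    · right; right; linarith
  · rintro (h | h | h) <;> rw [← hx, ← hy, ← hz, h] <;> ring

theorem stmt1 (A B C α β γ : ℝ) (hA : A ≠ 0) (hB : B ≠ 0) (hC : C ≠ 0)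
    (hα : α ≠ 0) (hβ : β ≠ 0) (hγ : γ ≠ 0) :
    A^2*α^2 + B^2*β^2 + C^2*γ^2 - 2*A*B*α*β - 2*A*C*α*γ - 2*B*C*β*γ = 0 ↔
    (((0 < A*α ∧ 0 < B*β ∧ 0 < C*γ) ∨ (A*α < 0 ∧ B*β < 0 ∧ C*γ < 0)) ∧
      (Real.sqrt |A*α| = Real.sqrt |B*β| + Real.sqrt |C*γ| ∨
       Real.sqrt |B*β| = Real.sqrt |A*α| + Real.sqrt |C*γ| ∨
       Real.sqrt |C*γ| = Real.sqrt |A*α| + Real.sqrt |B*β|)) := by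
  have ha : A*α ≠ 0 := mul_ne_zero hA hα
  have hb : B*β ≠ 0 := mul_ne_zero hB hβ
  have hc : C*γ ≠ 0 := mul_ne_zero hC hγ
  have hE : A^2*α^2 + B^2*β^2 + C^2*γ^2 - 2*A*B*α*β - 2*A*C*α*γ - 2*B*C*β*γ
      = (A*α)^2 + (B*β)^2 + (C*γ)^2 - 2*(A*α)*(B*β) - 2*(A*α)*(C*γ) - 2*(B*β)*(C*γ) := by
    ring
  rw [hE]
  set a := A*α
  set b := B*β
  set c := C*γ
  clear_value a b c
  rcases ha.lt_or_gt with ha' | ha' <;> rcases hb.lt_or_gt with hb' | hb' <;>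
    rcases hc.lt_or_gt with hc' | hc'
  · -- all negative
    rw [abs_of_neg ha', abs_of_neg hb', abs_of_neg hc']
    have hE2 : a^2 + b^2 + c^2 - 2*a*b - 2*a*c - 2*b*c
        = (-a)^2 + (-b)^2 + (-c)^2 - 2*(-a)*(-b) - 2*(-a)*(-c) - 2*(-b)*(-c) := by ring
    rw [hE2, aux_pos (-a) (-b) (-c) (by linarith) (by linarith) (by linarith)]
    constructor
    · intro h; exact ⟨Or.inr ⟨ha', hb', hc'⟩, h⟩
    · rintro ⟨_, h⟩; exact h
  · constructor
    · intro h; nlinarith [sq_nonneg (a-b), mul_pos (neg_pos.2 ha') hc', mul_pos (neg_pos.2 hb') hc', pow_pos hc' 2]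
    · rintro ⟨(⟨h1, h2, h3⟩ | ⟨h1, h2, h3⟩), _⟩ <;> linarith
  · constructor
    · intro h; nlinarith [sq_nonneg (a-c), mul_pos (neg_pos.2 ha') hb', mul_pos hb' (neg_pos.2 hc'), pow_pos hb' 2]
    · rintro ⟨(⟨h1, h2, h3⟩ | ⟨h1, h2, h3⟩), _⟩ <;> linarith
  · constructor
    · intro h; nlinarith [sq_nonneg (b-c), mul_pos (neg_pos.2 ha') hb', mul_pos (neg_pos.2 ha') hc', pow_pos (neg_pos.2 ha') 2]
    · rintro ⟨(⟨h1, h2, h3⟩ | ⟨h1, h2, h3⟩), _⟩ <;> linarith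
  · constructor
    · intro h; nlinarith [sq_nonneg (b-c), mul_pos ha' (neg_pos.2 hb'), mul_pos ha' (neg_pos.2 hc'), pow_pos ha' 2]
    · rintro ⟨(⟨h1, h2, h3⟩ | ⟨h1, h2, h3⟩), _⟩ <;> linarith
  · constructor
    · intro h; nlinarith [sq_nonneg (a-c), mul_pos ha' (neg_pos.2 hb'), mul_pos hc' (neg_pos.2 hb'), pow_pos (neg_pos.2 hb') 2]
    · rintro ⟨(⟨h1, h2, h3⟩ | ⟨h1, h2, h3⟩), _⟩ <;> linarith
  · constructor
    · intro h; nlinarith [sq_nonneg (a-b), mul_pos ha' (neg_pos.2 hc'), mul_pos hb' (neg_pos.2 hc'), pow_pos (neg_pos.2 hc') 2]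
    · rintro ⟨(⟨h1, h2, h3⟩ | ⟨h1, h2, h3⟩), _⟩ <;> linarith
  · -- all positive
    rw [abs_of_pos ha', abs_of_pos hb', abs_of_pos hc',
      aux_pos a b c ha' hb' hc']
    constructor
    · intro h; exact ⟨Or.inl ⟨ha', hb', hc'⟩, h⟩
    · rintro ⟨_, h⟩; exact h
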